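/- Let n ∈ ℕ, t ∈ ℂ, let p be a monic polynomial of degree n over ℂ, and let κ, κ̃ ∈ ℂ, not both zero. Assume the degenerate orthogonality conditions: for every j with 0 ≤ j ≤ n, κ·[I₃ − I₁](x ↦ x^j·p(x)·e^{2θ(x;t)}) + κ̃·[I₃ − I₅](x ↦ x^j·p(x)·e^{2θ(x;t)}) = 0. Then F(x) := p(x)·exp(θ(x;t)) satisfies F''(x) = (x⁴ + t·x² + 2(n+1)·x + Λ)·F(x) for all x ∈ ℂ, where Λ := t²/4 − 2·(coefficient of x^{n−1} in p), equivalently Λ = t²/4 + 2·(sum of the roots of p counted with multiplicity). In particular the quasi-polynomial F solves the quartic anharmonic oscillator boundary problem with J = n + 1. -/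

import Mathlib

open MeasureTheory Set Polynomial Filter Complex Topology

/-- Direction at infinity of argument kπ/3. -/
noncomputable def rayDir (k : ℕ) : ℂ := Complex.exp ((k : ℂ) * Real.pi * Complex.I / 3)

/-- Ray integral I_k(f) = ω_k · ∫₀^∞ f(r·ω_k) dr. -/
noncomputable def rayIntegral (k : ℕ) (f : ℂ → ℂ) : ℂ :=
  rayDir k * ∫ r in Set.Ioi (0 : ℝ), f ((r : ℂ) * rayDir k)

lemma norm_rayDir (k : ℕ) : ‖rayDir k‖ = 1 := by
  rw [rayDir]
  rw [Complex.norm_exp]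
  have : ((k : ℂ) * Real.pi * Complex.I / 3).re = 0 := by
    simp [Complex.div_re, Complex.mul_re, Complex.mul_im]
  rw [this, Real.exp_zero]

lemma rayDir_cube (k : ℕ) (hk : Odd k) : rayDir k ^ 3 = -1 := by
  rw [rayDir, ← Complex.exp_nat_mul]
  have : ((3:ℕ) : ℂ) * ((k : ℂ) * Real.pi * Complex.I / 3) = (k : ℂ) * (Real.pi * Complex.I) := by
    ring
  rw [this]
  obtain ⟨m, rfl⟩ := hk
  push_cast
  rw [add_mul, Complex.exp_add, one_mul, Complex.exp_pi_mul_I]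
  have : (2 : ℂ) * (m : ℂ) * (Real.pi * I) = (m : ℤ) * (2 * Real.pi * I) := by push_cast; ring
  rw [this, Complex.exp_int_mul_two_pi_mul_I, one_mul]

noncomputable def Ew (t z : ℂ) : ℂ := Complex.exp (2 * (z ^ 3 / 3 + t * z / 2))

lemma norm_Ew_ray (k : ℕ) (hk : Odd k) (t : ℂ) (r : ℝ) :
    ‖Ew t ((r : ℂ) * rayDir k)‖ = Real.exp (-(2 * r ^ 3 / 3) + (t * rayDir k).re * r) := by
  rw [Ew, Complex.norm_exp]
  congr 1
  have h3 : ((r : ℂ) * rayDir k) ^ 3 = -(r : ℂ) ^ 3 := by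
    rw [mul_pow, rayDir_cube k hk, mul_neg_one]
  have : (2 : ℂ) * (((r:ℂ) * rayDir k) ^ 3 / 3 + t * ((r:ℂ) * rayDir k) / 2)
      = -(2 * (r:ℂ) ^ 3 / 3) + (t * rayDir k) * (r : ℂ) := by
    rw [h3]; ring
  rw [this]
  simp [Complex.add_re, Complex.mul_re, Complex.ofReal_re, Complex.ofReal_im,
    ← Complex.ofReal_pow]


lemma aux_bound (i : ℕ) (c : ℝ) :
    ∃ R : ℝ, 1 ≤ R ∧ ∀ r : ℝ, R ≤ r →
      r ^ i * Real.exp (-(2 * r ^ 3 / 3) + c * r) ≤ Real.exp (-r) := by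
  set M : ℝ := max 0 ((i : ℝ) + c + 1) with hM
  refine ⟨max 1 (Real.sqrt (3 * M / 2)), le_max_left _ _, fun r hr => ?_⟩
  have hr1 : (1 : ℝ) ≤ r := le_trans (le_max_left _ _) hr
  have hr0 : (0 : ℝ) ≤ r := by linarith
  have hsq : 3 * M / 2 ≤ r ^ 2 := by
    have h1 : Real.sqrt (3 * M / 2) ≤ r := le_trans (le_max_right _ _) hr
    have h2 : 0 ≤ 3 * M / 2 := by positivity
    nlinarith [Real.sq_sqrt h2, Real.sqrt_nonneg (3 * M / 2)]
  have hpow : r ^ i ≤ Real.exp ((i : ℝ) * r) := by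
    have h1 : r ≤ Real.exp r := by
      have := Real.add_one_le_exp r; linarith
    calc r ^ i ≤ (Real.exp r) ^ i := pow_le_pow_left₀ hr0 h1 i
      _ = Real.exp ((i : ℝ) * r) := by rw [← Real.exp_nat_mul]
  calc r ^ i * Real.exp (-(2 * r ^ 3 / 3) + c * r)
      ≤ Real.exp ((i : ℝ) * r) * Real.exp (-(2 * r ^ 3 / 3) + c * r) := by
        apply mul_le_mul_of_nonneg_right hpow (Real.exp_nonneg _)
    _ = Real.exp ((i : ℝ) * r + (-(2 * r ^ 3 / 3) + c * r)) := by rw [← Real.exp_add]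
    _ ≤ Real.exp (-r) := by
        apply Real.exp_le_exp.2
        have hMr : ((i : ℝ) + c + 1) * r ≤ M * r :=
          mul_le_mul_of_nonneg_right (le_max_right _ _) hr0
        have : M * r ≤ 2 * r ^ 3 / 3 := by nlinarith
        nlinarith

lemma integrableOn_aux (i : ℕ) (c : ℝ) :
    IntegrableOn (fun r : ℝ => r ^ i * Real.exp (-(2 * r ^ 3 / 3) + c * r)) (Ioi (0 : ℝ)) := by
  obtain ⟨R, hR1, hRb⟩ := aux_bound i c
  have hcont : Continuous (fun r : ℝ => r ^ i * Real.exp (-(2 * r ^ 3 / 3) + c * r)) := by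
    continuity
  have h0R : IntegrableOn (fun r : ℝ => r ^ i * Real.exp (-(2 * r ^ 3 / 3) + c * r)) (Ioc 0 R) :=
    hcont.integrableOn_Ioc
  have hRtop : IntegrableOn (fun r : ℝ => r ^ i * Real.exp (-(2 * r ^ 3 / 3) + c * r)) (Ioi R) := by
    have hexp : IntegrableOn (fun x : ℝ => Real.exp (-(1 : ℝ) * x)) (Ioi R) :=
      exp_neg_integrableOn_Ioi R one_pos
    apply Integrable.mono' (g := fun x : ℝ => Real.exp (-(1:ℝ) * x)) hexp
      (hcont.aestronglyMeasurable.restrict)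
    filter_upwards [ae_restrict_mem measurableSet_Ioi] with r hr
    have hr' : R ≤ r := le_of_lt hr
    have h0r : (0:ℝ) ≤ r := by linarith
    rw [Real.norm_eq_abs, _root_.abs_of_nonneg (by positivity)]
    simpa using hRb r hr'
  have : Ioc (0:ℝ) R ∪ Ioi R = Ioi 0 := Ioc_union_Ioi_eq_Ioi (by linarith)
  rw [← this]
  exact h0R.union hRtop


lemma tendsto_aux (i : ℕ) (c : ℝ) :
    Tendsto (fun r : ℝ => r ^ i * Real.exp (-(2 * r ^ 3 / 3) + c * r)) atTop (𝓝 0) := by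
  obtain ⟨R, hR1, hRb⟩ := aux_bound i c
  apply squeeze_zero' (g := fun r : ℝ => Real.exp (-r))
  · filter_upwards [eventually_ge_atTop (1:ℝ)] with r hr
    positivity
  · filter_upwards [eventually_ge_atTop R] with r hr
    exact hRb r hr
  · exact Real.tendsto_exp_neg_atTop_nhds_zero

lemma norm_eval_le (q : Polynomial ℂ) (z : ℂ) :
    ‖q.eval z‖ ≤ ∑ i ∈ Finset.range (q.natDegree + 1), ‖q.coeff i‖ * ‖z‖ ^ i := by
  conv_lhs => rw [Polynomial.eval_eq_sum_range]
  refine le_trans (norm_sum_le _ _) ?_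
  apply Finset.sum_le_sum
  intro i _
  rw [norm_mul, norm_pow]

noncomputable def Jr (k : ℕ) (t : ℂ) (q : Polynomial ℂ) : ℂ :=
  rayIntegral k (fun x => q.eval x * Ew t x)

lemma integrableOn_ray (k : ℕ) (hk : Odd k) (t : ℂ) (q : Polynomial ℂ) :
    IntegrableOn (fun r : ℝ => q.eval ((r : ℂ) * rayDir k) * Ew t ((r : ℂ) * rayDir k))
      (Ioi (0 : ℝ)) := by
  induction q using Polynomial.induction_on' with
  | add p q hp hq =>
      simp only [Polynomial.eval_add, add_mul]
      exact hp.add hq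
  | monomial i a =>
      have hcont : Continuous (fun r : ℝ =>
          ((Polynomial.monomial i a).eval ((r : ℂ) * rayDir k)) * Ew t ((r : ℂ) * rayDir k)) := by
        simp only [Polynomial.eval_monomial, Ew]
        fun_prop
      apply Integrable.mono'
        (g := fun r : ℝ => ‖a‖ * (r ^ i * Real.exp (-(2 * r ^ 3 / 3) + (t * rayDir k).re * r)))
        ((integrableOn_aux i ((t * rayDir k).re)).const_mul ‖a‖)
        hcont.aestronglyMeasurable.restrict
      filter_upwards [ae_restrict_mem measurableSet_Ioi] with r hr
      have hr0 : (0 : ℝ) ≤ r := le_of_lt hr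
      rw [Polynomial.eval_monomial, norm_mul, norm_mul, norm_pow, norm_mul,
        Complex.norm_real, Real.norm_eq_abs, _root_.abs_of_nonneg hr0, norm_rayDir,
        mul_one, norm_Ew_ray k hk t r]
      ring_nf
      exact le_refl _

lemma hasDerivAt_Ew (t z : ℂ) :
    HasDerivAt (fun z => Ew t z) ((2 * z ^ 2 + t) * Ew t z) z := by
  have h1 : HasDerivAt (fun z : ℂ => 2 * (z ^ 3 / 3 + t * z / 2)) (2 * z ^ 2 + t) z := by
    have : HasDerivAt (fun z : ℂ => z ^ 3 / 3 + t * z / 2)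
        ((3 : ℕ) * z ^ 2 / 3 + t * 1 / 2) z :=
      (((hasDerivAt_pow 3 z).div_const 3)).add (((hasDerivAt_id z).const_mul t).div_const 2)
    have := this.const_mul 2
    refine this.congr_deriv ?_
    push_cast
    ring
  simpa [Ew, mul_comm] using h1.cexp

lemma hasDerivAt_g (t : ℂ) (q : Polynomial ℂ) (z : ℂ) :
    HasDerivAt (fun z => q.eval z * Ew t z)
      ((derivative q + (2 * X ^ 2 + C t) * q).eval z * Ew t z) z := by
  have h := (q.hasDerivAt z).mul (hasDerivAt_Ew t z)
  refine h.congr_deriv ?_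
  simp only [Polynomial.eval_add, Polynomial.eval_mul, Polynomial.eval_pow,
    Polynomial.eval_X, Polynomial.eval_C, Polynomial.eval_ofNat]
  ring

lemma tendsto_ray_zero (k : ℕ) (hk : Odd k) (t : ℂ) (q : Polynomial ℂ) :
    Tendsto (fun r : ℝ => q.eval ((r : ℂ) * rayDir k) * Ew t ((r : ℂ) * rayDir k))
      atTop (𝓝 0) := by
  apply squeeze_zero_norm'
    (a := fun r : ℝ => ∑ i ∈ Finset.range (q.natDegree + 1),
      ‖q.coeff i‖ * (r ^ i * Real.exp (-(2 * r ^ 3 / 3) + (t * rayDir k).re * r)))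
  · filter_upwards [eventually_ge_atTop (0:ℝ)] with r hr0
    rw [norm_mul, norm_Ew_ray k hk t r]
    have h1 : ‖q.eval ((r:ℂ) * rayDir k)‖ ≤
        ∑ i ∈ Finset.range (q.natDegree + 1), ‖q.coeff i‖ * r ^ i := by
      refine le_trans (norm_eval_le q _) ?_
      apply Finset.sum_le_sum
      intro i _
      rw [norm_mul, Complex.norm_real, Real.norm_eq_abs, _root_.abs_of_nonneg hr0,
        norm_rayDir, mul_one]
    calc ‖q.eval ((r:ℂ) * rayDir k)‖ * Real.exp (-(2*r^3/3) + (t * rayDir k).re * r)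
        ≤ (∑ i ∈ Finset.range (q.natDegree + 1), ‖q.coeff i‖ * r ^ i) *
            Real.exp (-(2*r^3/3) + (t * rayDir k).re * r) :=
          mul_le_mul_of_nonneg_right h1 (Real.exp_nonneg _)
      _ = _ := by rw [Finset.sum_mul]; apply Finset.sum_congr rfl; intro i _; ring
  · have : Tendsto (fun r : ℝ => ∑ i ∈ Finset.range (q.natDegree + 1),
        ‖q.coeff i‖ * (r ^ i * Real.exp (-(2 * r ^ 3 / 3) + (t * rayDir k).re * r)))
        atTop (𝓝 (∑ i ∈ Finset.range (q.natDegree + 1), ‖q.coeff i‖ * 0)) := by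
      apply tendsto_finset_sum
      intro i _
      exact (tendsto_aux i ((t * rayDir k).re)).const_mul _
    simpa using this

lemma Jr_master (k : ℕ) (hk : Odd k) (t : ℂ) (q : Polynomial ℂ) :
    Jr k t (derivative q + (2 * X ^ 2 + C t) * q) = - q.eval 0 := by
  set ω := rayDir k with hω
  set D := derivative q + (2 * X ^ 2 + C t) * q with hD
  have hderiv : ∀ r : ℝ, HasDerivAt (fun r : ℝ => q.eval ((r:ℂ) * ω) * Ew t ((r:ℂ) * ω))
      (ω * (D.eval ((r:ℂ) * ω) * Ew t ((r:ℂ) * ω))) r := by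
    intro r
    have h1 : HasDerivAt (fun z : ℂ => q.eval (z * ω) * Ew t (z * ω))
        ((D.eval ((r:ℂ) * ω) * Ew t ((r:ℂ) * ω)) * ω) (r : ℂ) := by
      have h0 : HasDerivAt (fun z : ℂ => z * ω) ω (r : ℂ) := by
        simpa using (hasDerivAt_id (r:ℂ)).mul_const ω
      exact (hasDerivAt_g t q ((r:ℂ) * ω)).comp (r:ℂ) h0
    have := h1.comp_ofReal
    simpa [mul_comm] using this
  have hint : IntegrableOn (fun r : ℝ => ω * (D.eval ((r:ℂ) * ω) * Ew t ((r:ℂ) * ω)))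
      (Ioi (0:ℝ)) := (integrableOn_ray k hk t D).const_mul ω
  have htend := tendsto_ray_zero k hk t q
  have key := integral_Ioi_of_hasDerivAt_of_tendsto
    (f := fun r : ℝ => q.eval ((r:ℂ) * ω) * Ew t ((r:ℂ) * ω))
    (f' := fun r : ℝ => ω * (D.eval ((r:ℂ) * ω) * Ew t ((r:ℂ) * ω)))
    ((hderiv 0).continuousAt.continuousWithinAt)
    (fun x _ => hderiv x) hint htend
  have : Jr k t D = ∫ r in Ioi (0:ℝ), ω * (D.eval ((r:ℂ) * ω) * Ew t ((r:ℂ) * ω)) := by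
    rw [Jr, rayIntegral, ← hω, ← integral_const_mul]
  rw [this, key]
  simp [Ew]

lemma odd1 : Odd 1 := ⟨0, rfl⟩
lemma odd3 : Odd 3 := ⟨1, rfl⟩
lemma odd5 : Odd 5 := ⟨2, rfl⟩

lemma Jr_add (k : ℕ) (hk : Odd k) (t : ℂ) (q₁ q₂ : Polynomial ℂ) :
    Jr k t (q₁ + q₂) = Jr k t q₁ + Jr k t q₂ := by
  simp only [Jr, rayIntegral]
  rw [← mul_add, ← integral_add (integrableOn_ray k hk t q₁) (integrableOn_ray k hk t q₂)]
  simp [add_mul]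

lemma Jr_Cmul (k : ℕ) (t : ℂ) (a : ℂ) (q : Polynomial ℂ) :
    Jr k t (C a * q) = a * Jr k t q := by
  simp only [Jr, rayIntegral, Polynomial.eval_mul, Polynomial.eval_C, mul_assoc]
  rw [integral_const_mul]
  ring

noncomputable def Lf (κ κ' t : ℂ) (q : Polynomial ℂ) : ℂ :=
  κ * (Jr 3 t q - Jr 1 t q) + κ' * (Jr 3 t q - Jr 5 t q)

lemma Lf_add (κ κ' t : ℂ) (q₁ q₂ : Polynomial ℂ) :
    Lf κ κ' t (q₁ + q₂) = Lf κ κ' t q₁ + Lf κ κ' t q₂ := by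
  simp only [Lf, Jr_add 1 odd1 t, Jr_add 3 odd3 t, Jr_add 5 odd5 t]
  ring

lemma Lf_Cmul (κ κ' t : ℂ) (a : ℂ) (q : Polynomial ℂ) :
    Lf κ κ' t (C a * q) = a * Lf κ κ' t q := by
  simp only [Lf, Jr_Cmul]
  ring

lemma Lf_master (κ κ' t : ℂ) (q : Polynomial ℂ) :
    Lf κ κ' t (derivative q + (C 2 * X ^ 2 + C t) * q) = 0 := by
  have h2 : (C 2 : Polynomial ℂ) = 2 := map_ofNat C 2
  simp only [Lf, h2, Jr_master 1 odd1 t q, Jr_master 3 odd3 t q, Jr_master 5 odd5 t q]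
  ring

section Algebra

variable {t : ℂ} {L : Polynomial ℂ → ℂ}
variable (hadd : ∀ a b, L (a + b) = L a + L b)
variable (hsmul : ∀ (c : ℂ) q, L (C c * q) = c * L q)
variable (hmaster : ∀ q, L (derivative q + (C 2 * X ^ 2 + C t) * q) = 0)

include hadd hsmul hmaster in
lemma Hgen (f : Polynomial ℂ) (i : ℕ) :
    L (X ^ i * derivative f)
      = -((i : ℂ) * L (X ^ (i - 1) * f) + 2 * L (X ^ (i + 2) * f) + t * L (X ^ i * f)) := by
  have h := hmaster (X ^ i * f)
  have e : derivative (X ^ i * f) + (C 2 * X ^ 2 + C t) * (X ^ i * f)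
      = X ^ i * derivative f + (C (i : ℂ) * (X ^ (i - 1) * f)
        + (C 2 * (X ^ (i + 2) * f) + C t * (X ^ i * f))) := by
    rw [derivative_mul, derivative_X_pow]
    ring
  rw [e, hadd, hadd, hadd, hsmul, hsmul, hsmul] at h
  linear_combination h

include hadd hsmul hmaster in
lemma mom_deriv (f : Polynomial ℂ) (h : ∀ j, L (X ^ j * f) = 0) (j : ℕ) :
    L (X ^ j * derivative f) = 0 := by
  rw [Hgen hadd hsmul hmaster f j, h, h, h]
  ring

include hadd hsmul hmaster in
lemma allmom (hnd : L 1 ≠ 0 ∨ L X ≠ 0) :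
    ∀ d (f : Polynomial ℂ), f.natDegree ≤ d → (∀ j, L (X ^ j * f) = 0) → f = 0 := by
  intro d
  induction d with
  | zero =>
      intro f hd h
      have hf := Polynomial.eq_C_of_natDegree_le_zero hd
      by_contra h0
      have ha : f.coeff 0 ≠ 0 := by
        intro hc
        exact h0 (by rw [hf, hc, map_zero])
      have h1 : L 1 = 0 := by
        have h' := h 0
        rw [hf, pow_zero, one_mul] at h'
        have e : C (f.coeff 0) = C (f.coeff 0) * 1 := by ring
        rw [e, hsmul] at h'
        exact (mul_eq_zero.mp h').resolve_left ha
      have h2 : L X = 0 := by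
        have h' := h 1
        rw [hf, pow_one] at h'
        have e : X * C (f.coeff 0) = C (f.coeff 0) * X := by ring
        rw [e, hsmul] at h'
        exact (mul_eq_zero.mp h').resolve_left ha
      rcases hnd with h | h <;> contradiction
  | succ d IH =>
      intro f hd h
      by_cases h0 : f.natDegree = 0
      · exact IH f (by omega) h
      · have hlt : (derivative f).natDegree < f.natDegree :=
          Polynomial.natDegree_derivative_lt h0
        have hder : derivative f = 0 :=
          IH (derivative f) (by omega) (mom_deriv hadd hsmul hmaster f h)
        exact absurd (Polynomial.natDegree_eq_zero_of_derivative_eq_zero hder) h0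

include hadd hsmul hmaster in
lemma key_zero (hnd : L 1 ≠ 0 ∨ L X ≠ 0) :
    ∀ m : ℕ, ∀ s : Polynomial ℂ, s.natDegree ≤ m →
      (∀ j, j ≤ m + 1 → L (X ^ j * s) = 0) → s = 0 := by
  intro m
  induction m using Nat.strong_induction_on with
  | _ m IH =>
  intro s hdeg horth
  by_contra hs0
  have hdm : s.natDegree = m := by
    rcases lt_or_eq_of_le hdeg with hlt | he
    · exact absurd (IH _ hlt s le_rfl (fun j hj => horth j (by omega))) hs0
    · exact he
  have hlc : s.leadingCoeff ≠ 0 := leadingCoeff_ne_zero.mpr hs0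
  have hc0 : s.leadingCoeff⁻¹ ≠ 0 := inv_ne_zero hlc
  set s₁ := C s.leadingCoeff⁻¹ * s with hs₁
  have hs₁0 : s₁ ≠ 0 := by
    apply mul_ne_zero _ hs0
    simpa using hc0
  have hdeg₁ : s₁.natDegree = m := by
    rw [hs₁, Polynomial.natDegree_C_mul hc0, hdm]
  have hmon : s₁.Monic := by
    rw [Polynomial.Monic, hs₁, Polynomial.leadingCoeff_mul, Polynomial.leadingCoeff_C]
    exact inv_mul_cancel₀ hlc
  have horth₁ : ∀ j, j ≤ m + 1 → L (X ^ j * s₁) = 0 := by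
    intro j hj
    have e : X ^ j * s₁ = C s.leadingCoeff⁻¹ * (X ^ j * s) := by rw [hs₁]; ring
    rw [e, hsmul, horth j hj, mul_zero]
  clear hs₁ horth hdeg hdm hs0
  rcases m with _ | m'
  · -- degree 0 case
    have h1 : s₁ = 1 := hmon.natDegree_eq_zero.mp hdeg₁
    have hL1 : L 1 = 0 := by
      have h' := horth₁ 0 (by omega)
      rwa [pow_zero, one_mul, h1] at h'
    have hLX : L X = 0 := by
      have h' := horth₁ 1 (by omega)
      rwa [h1, mul_one, pow_one] at h'
    rcases hnd with h | h <;> contradiction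
  · -- degree m'+1 case
    set a := s₁.coeff m' with ha
    set r := derivative (derivative s₁) + (C 2 * X ^ 2 + C t) * derivative s₁
        - C (2 * ((m' : ℂ) + 1)) * (X * s₁) + C (2 * a) * s₁ with hr
    -- Claim A : natDegree r ≤ m'
    have hcoeffs : ∀ k, m' + 1 < k → s₁.coeff k = 0 := by
      intro k hk
      exact Polynomial.coeff_eq_zero_of_natDegree_lt (by omega)
    have htop : s₁.coeff (m' + 1) = 1 := by
      have := hmon.coeff_natDegree
      rwa [hdeg₁] at this
    have hA : r.natDegree ≤ m' := by
      rw [Polynomial.natDegree_le_iff_coeff_eq_zero]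
      intro k hk
      have hrr : r = derivative (derivative s₁) + derivative s₁ * X ^ 2 * C 2
          + derivative s₁ * C t + s₁ * X ^ 1 * C (-(2 * ((m' : ℂ) + 1))) + s₁ * C (2 * a) := by
        rw [hr]
        simp only [map_neg, map_add, map_mul, map_one, map_ofNat]
        ring
      rw [hrr]
      simp only [Polynomial.coeff_add, Polynomial.coeff_mul_C, Polynomial.coeff_mul_X_pow',
        Polynomial.coeff_derivative]
      have hk1 : 1 ≤ k := by omega
      rcases (by omega : k = m' + 1 ∨ k = m' + 2 ∨ m' + 3 ≤ k) with h | h | h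
      · subst h
        rw [if_pos hk1]
        rcases (by omega : m' = 0 ∨ 1 ≤ m') with h0 | h0
        · subst h0
          norm_num
          rw [hcoeffs 3 (by omega), hcoeffs 2 (by omega), htop]
          ring
        · rw [if_pos (by omega : 2 ≤ m' + 1)]
          have e2 : m' + 1 - 1 = m' := by omega
          rw [e2, hcoeffs (m' + 1 + 1 + 1) (by omega), hcoeffs (m' + 1 + 1) (by omega), htop,
            show m' + 1 - 2 + 1 = m' by omega, ← ha,
            show ((m' + 1 - 2 : ℕ) : ℂ) = (m' : ℂ) - 1 by
              rw [show m' + 1 - 2 = m' - 1 by omega, Nat.cast_sub h0, Nat.cast_one]]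
          ring
      · subst h
        rw [if_pos hk1, if_pos (by omega : 2 ≤ m' + 2)]
        have e1 : m' + 2 - 2 + 1 = m' + 1 := by omega
        have e2 : m' + 2 - 1 = m' + 1 := by omega
        rw [e1, e2, hcoeffs (m' + 2 + 1 + 1) (by omega), hcoeffs (m' + 2 + 1) (by omega),
          hcoeffs (m' + 2) (by omega), htop]
        push_cast [e1]
        ring
      · rw [if_pos hk1, if_pos (by omega : 2 ≤ k)]
        have e1 : k - 2 + 1 = k - 1 := by omega
        rw [e1, hcoeffs (k + 1 + 1) (by omega), hcoeffs (k + 1) (by omega),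
          hcoeffs k (by omega), hcoeffs (k - 1) (by omega)]
        ring
    -- Claim B : orthogonality of r
    have hV : ∀ i, i ≤ m' → L (X ^ i * derivative s₁) = 0 := by
      intro i hi
      rw [Hgen hadd hsmul hmaster s₁ i, horth₁ (i - 1) (by omega), horth₁ (i + 2) (by omega), horth₁ i (by omega)]
      ring
    have hB : ∀ j, j ≤ m' + 1 → L (X ^ j * r) = 0 := by
      intro j hj
      have h1 : L (X ^ j * derivative (derivative s₁)
            + (C 2 * X ^ 2 + C t) * (X ^ j * derivative s₁))
          = -(j : ℂ) * L (X ^ (j - 1) * derivative s₁) := by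
        have h := hmaster (X ^ j * derivative s₁)
        have e : derivative (X ^ j * derivative s₁)
            + (C 2 * X ^ 2 + C t) * (X ^ j * derivative s₁)
            = C (j : ℂ) * (X ^ (j - 1) * derivative s₁)
              + (X ^ j * derivative (derivative s₁)
                + (C 2 * X ^ 2 + C t) * (X ^ j * derivative s₁)) := by
          rw [derivative_mul, derivative_X_pow]
          simp only [map_neg, map_add, map_mul, map_one, map_ofNat]
          ring
        rw [e, hadd, hsmul] at h
        linear_combination h
      have e2 : X ^ j * r = (X ^ j * derivative (derivative s₁)
            + (C 2 * X ^ 2 + C t) * (X ^ j * derivative s₁))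
          + (C (-(2 * ((m' : ℂ) + 1))) * (X ^ (j + 1) * s₁) + C (2 * a) * (X ^ j * s₁)) := by
        rw [hr]
        simp only [map_neg, map_add, map_mul, map_one, map_ofNat]
        ring
      rw [e2, hadd, h1, hadd, hsmul, hsmul, horth₁ (j + 1) (by omega), horth₁ j (by omega)]
      rcases Nat.eq_zero_or_pos j with hj0 | hjp
      · subst hj0; simp
      · rw [hV (j - 1) (by omega)]; ring
    -- IH applied to r
    have hr0 : r = 0 := IH m' (by omega) r hA (fun j hj => hB j hj)
    -- Claim C : all moments of s₁ vanish
    have hODE : derivative (derivative s₁) = C (2 * ((m' : ℂ) + 1)) * (X * s₁)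
        - C (2 * a) * s₁ - (C 2 * X ^ 2 + C t) * derivative s₁ := by
      linear_combination hr0 - hr
    have hB2 : ∀ i : ℕ, ((i : ℂ) + 1) * L (X ^ i * derivative s₁)
        = -(2 * ((m' : ℂ) + 1) * L (X ^ (i + 2) * s₁)) + 2 * a * L (X ^ (i + 1) * s₁) := by
      intro i
      have hBa := Hgen hadd hsmul hmaster (derivative s₁) (i + 1)
      have e : X ^ (i + 1) * derivative (derivative s₁)
          = C (2 * ((m' : ℂ) + 1)) * (X ^ (i + 2) * s₁)
            + (C (-(2 * a)) * (X ^ (i + 1) * s₁)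
              + (C (-2) * (X ^ (i + 3) * derivative s₁)
                + C (-t) * (X ^ (i + 1) * derivative s₁))) := by
        rw [hODE]
        simp only [map_neg, map_add, map_mul, map_one, map_ofNat]
        ring
      rw [e, hadd, hadd, hadd, hsmul, hsmul, hsmul, hsmul] at hBa
      have e2 : (i + 1 : ℕ) - 1 = i := by omega
      have e3 : i + 1 + 2 = i + 3 := by omega
      rw [e2, e3] at hBa
      push_cast at hBa ⊢
      linear_combination hBa
    have hrec : ∀ i : ℕ, 2 * ((i : ℂ) - (m' : ℂ)) * L (X ^ (i + 2) * s₁)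
        = -(2 * a * L (X ^ (i + 1) * s₁)) - (i : ℂ) * ((i : ℂ) + 1) * L (X ^ (i - 1) * s₁)
          - t * ((i : ℂ) + 1) * L (X ^ i * s₁) := by
      intro i
      have hAa := Hgen hadd hsmul hmaster s₁ i
      have h2 := hB2 i
      linear_combination ((i : ℂ) + 1) * hAa - h2
    have hall : ∀ j, L (X ^ j * s₁) = 0 := by
      intro j
      induction j using Nat.strong_induction_on with
      | _ j IHj =>
      by_cases hj : j ≤ m' + 2
      · exact horth₁ j hj
      · obtain ⟨i, rfl⟩ : ∃ i, j = i + 2 := ⟨j - 2, by omega⟩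
        have hcoef : (2 : ℂ) * ((i : ℂ) - (m' : ℂ)) ≠ 0 := by
          apply mul_ne_zero two_ne_zero
          rw [sub_ne_zero]
          exact_mod_cast Nat.ne_of_gt (by omega : m' < i)
        have hre := hrec i
        rw [IHj (i + 1) (by omega), IHj i (by omega), IHj (i - 1) (by omega)] at hre
        simp only [mul_zero, neg_zero, sub_zero, zero_sub, add_zero, neg_eq_zero] at hre
        exact (mul_eq_zero.mp hre).resolve_left hcoef
    exact hs₁0 (allmom hadd hsmul hmaster hnd s₁.natDegree s₁ le_rfl hall)

end Algebra
-- chunk F (appended to main)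

-- chunk W

lemma hasDerivAt_Ew_param (z τ : ℂ) :
    HasDerivAt (fun τ => Ew τ z) (z * Ew τ z) τ := by
  have h : HasDerivAt (fun τ : ℂ => 2 * (z ^ 3 / 3 + τ * z / 2)) (2 * (0 + 1 * z / 2)) τ :=
    HasDerivAt.const_mul 2
      ((hasDerivAt_const τ _).add (((hasDerivAt_id τ).mul_const z).div_const 2))
  have h1 : HasDerivAt (fun τ : ℂ => 2 * (z ^ 3 / 3 + τ * z / 2)) z τ := by
    convert h using 1
    ring
  simpa [Ew, mul_comm] using h1.cexp

lemma hasDerivAt_Jr (k : ℕ) (hk : Odd k) (j : ℕ) (τ₀ : ℂ) :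
    HasDerivAt (fun τ => Jr k τ (X ^ j)) (Jr k τ₀ (X ^ (j + 1))) τ₀ := by
  set ω := rayDir k with hω
  have hJr : ∀ (τ : ℂ) (i : ℕ), Jr k τ (X ^ i)
      = ω * ∫ r in Ioi (0:ℝ), ((r : ℂ) * ω) ^ i * Ew τ ((r : ℂ) * ω) := by
    intro τ i
    simp [Jr, rayIntegral, hω]
  have hint : ∀ (τ : ℂ) (i : ℕ),
      IntegrableOn (fun r : ℝ => ((r : ℂ) * ω) ^ i * Ew τ ((r : ℂ) * ω)) (Ioi (0:ℝ)) := by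
    intro τ i
    have := integrableOn_ray k hk τ (X ^ i)
    simpa using this
  have hcont : ∀ (τ : ℂ) (i : ℕ),
      AEStronglyMeasurable (fun r : ℝ => ((r : ℂ) * ω) ^ i * Ew τ ((r : ℂ) * ω))
        (volume.restrict (Ioi (0:ℝ))) := by
    intro τ i
    exact (hint τ i).aestronglyMeasurable
  have key := hasDerivAt_integral_of_dominated_loc_of_deriv_le
    (F := fun (τ : ℂ) (r : ℝ) => ((r : ℂ) * ω) ^ j * Ew τ ((r : ℂ) * ω))
    (F' := fun (τ : ℂ) (r : ℝ) => ((r : ℂ) * ω) ^ (j + 1) * Ew τ ((r : ℂ) * ω))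
    (μ := volume.restrict (Set.Ioi (0:ℝ)))
    (bound := fun r : ℝ => r ^ (j + 1) * Real.exp (-(2 * r ^ 3 / 3) + (‖τ₀‖ + 1) * r))
    (x₀ := τ₀) (Metric.ball_mem_nhds τ₀ one_pos)
    (Filter.Eventually.of_forall (fun τ => hcont τ j))
    (hint τ₀ j) (hcont τ₀ (j + 1)) ?_ ?_ ?_
  · have h2 := key.2
    have h3 := h2.const_mul ω
    rw [← hJr τ₀ (j + 1)] at h3
    have he : (fun τ => Jr k τ (X ^ j))
        = fun τ => ω * ∫ r in Ioi (0:ℝ), ((r : ℂ) * ω) ^ j * Ew τ ((r : ℂ) * ω) :=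
      funext fun τ => hJr τ j
    rw [he]
    exact h3
  · -- bound
    filter_upwards [ae_restrict_mem measurableSet_Ioi] with r hr τ hτ
    have hr0 : (0:ℝ) ≤ r := le_of_lt hr
    rw [norm_mul, norm_pow, norm_mul, Complex.norm_real, Real.norm_eq_abs,
      _root_.abs_of_nonneg hr0, norm_rayDir, mul_one, norm_Ew_ray k hk τ r]
    apply mul_le_mul_of_nonneg_left _ (by positivity)
    apply Real.exp_le_exp.2
    have h1 : (τ * ω).re ≤ ‖τ₀‖ + 1 := by
      calc (τ * ω).re ≤ ‖τ * ω‖ := Complex.re_le_norm _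
        _ = ‖τ‖ := by rw [norm_mul, norm_rayDir, mul_one]
        _ ≤ ‖τ₀‖ + 1 := by
            have := mem_ball_iff_norm.mp hτ
            calc ‖τ‖ = ‖τ₀ + (τ - τ₀)‖ := by ring_nf
              _ ≤ ‖τ₀‖ + ‖τ - τ₀‖ := norm_add_le _ _
              _ ≤ ‖τ₀‖ + 1 := by linarith
    nlinarith [mul_le_mul_of_nonneg_right h1 hr0]
  · -- bound integrable
    exact integrableOn_aux (j + 1) (‖τ₀‖ + 1)
  · -- differentiability
    filter_upwards [ae_restrict_mem measurableSet_Ioi] with r _ τ _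
    have h := (hasDerivAt_Ew_param ((r : ℂ) * ω) τ).const_mul (((r : ℂ) * ω) ^ j)
    refine h.congr_deriv ?_
    ring

noncomputable def phi (c : ℕ) (j : ℕ) (τ : ℂ) : ℂ := Jr 3 τ (X ^ j) - Jr c τ (X ^ j)

lemma hasDerivAt_phi (c : ℕ) (hc : Odd c) (j : ℕ) (τ₀ : ℂ) :
    HasDerivAt (phi c j) (phi c (j + 1) τ₀) τ₀ :=
  (hasDerivAt_Jr 3 odd3 j τ₀).sub (hasDerivAt_Jr c hc j τ₀)

lemma Jr_one_rec (k : ℕ) (hk : Odd k) (τ : ℂ) :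
    2 * Jr k τ (X ^ 2) + τ * Jr k τ (X ^ 0) = -1 := by
  have h := Jr_master k hk τ 1
  have e : derivative (1 : Polynomial ℂ) + (2 * X ^ 2 + C τ) * 1
      = C 2 * X ^ 2 + C τ * X ^ 0 := by
    simp only [derivative_one]
    rw [show ((2 : Polynomial ℂ)) = C 2 from (map_ofNat C 2).symm]
    ring
  rw [e, Jr_add k hk, Jr_Cmul, Jr_Cmul] at h
  have e2 : (X ^ 2 : Polynomial ℂ) = C 1 * X ^ 2 := by simp
  rw [e2, Jr_Cmul] at h
  simpa using h

lemma phi_rec (c : ℕ) (hc : Odd c) (τ : ℂ) :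
    2 * phi c 2 τ + τ * phi c 0 τ = 0 := by
  have h3 := Jr_one_rec 3 odd3 τ
  have hc' := Jr_one_rec c hc τ
  rw [phi, phi]
  linear_combination h3 - hc'

noncomputable def Wf (τ : ℂ) : ℂ := phi 1 0 τ * phi 5 1 τ - phi 1 1 τ * phi 5 0 τ

lemma hasDerivAt_Wf (τ : ℂ) : HasDerivAt Wf 0 τ := by
  have h10 := hasDerivAt_phi 1 odd1 0 τ
  have h11 := hasDerivAt_phi 1 odd1 1 τ
  have h50 := hasDerivAt_phi 5 odd5 0 τ
  have h51 := hasDerivAt_phi 5 odd5 1 τ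
  have h := (h10.mul h51).sub (h11.mul h50)
  have r1 := phi_rec 1 odd1 τ
  have r5 := phi_rec 5 odd5 τ
  refine h.congr_deriv ?_
  simp only [Nat.reduceAdd]
  linear_combination (phi 1 0 τ) / 2 * r5 - (phi 5 0 τ) / 2 * r1

lemma Wf_const (τ : ℂ) : Wf τ = Wf 0 :=
  is_const_of_deriv_eq_zero (𝕜 := ℂ)
    (fun x => (hasDerivAt_Wf x).differentiableAt) (fun x => (hasDerivAt_Wf x).deriv) τ 0

noncomputable def Creal (j : ℕ) : ℝ := ∫ r in Ioi (0:ℝ), r ^ j * Real.exp (-(2 * r ^ 3 / 3))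

lemma Creal_pos (j : ℕ) : 0 < Creal j := by
  rw [Creal]
  have hint : IntegrableOn (fun r : ℝ => r ^ j * Real.exp (-(2 * r ^ 3 / 3))) (Ioi (0:ℝ)) := by
    have := integrableOn_aux j 0
    simpa using this
  rw [setIntegral_pos_iff_support_of_nonneg_ae _ hint]
  · have hsub : Ioi (0:ℝ) ⊆ Function.support (fun r : ℝ => r ^ j * Real.exp (-(2 * r ^ 3 / 3)))
        ∩ Ioi (0:ℝ) := by
      intro r hr
      refine ⟨?_, hr⟩
      have hrp : (0:ℝ) < r := hr
      have : (0:ℝ) < r ^ j * Real.exp (-(2 * r ^ 3 / 3)) :=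
        mul_pos (pow_pos hrp j) (Real.exp_pos _)
      exact Function.mem_support.mpr (ne_of_gt this)
    calc (0 : ENNReal) < volume (Ioi (0:ℝ)) := by simp [Real.volume_Ioi]
      _ ≤ _ := measure_mono hsub
  · filter_upwards [ae_restrict_mem measurableSet_Ioi] with r hr
    have hr0 : (0:ℝ) ≤ r := le_of_lt hr
    exact mul_nonneg (pow_nonneg hr0 j) (Real.exp_nonneg _)

lemma Jr_zero_eval (k : ℕ) (hk : Odd k) (j : ℕ) :
    Jr k 0 (X ^ j) = rayDir k ^ (j + 1) * ((Creal j : ℝ) : ℂ) := by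
  rw [Jr, rayIntegral]
  have e : (fun r : ℝ => (X ^ j : Polynomial ℂ).eval ((r:ℂ) * rayDir k)
      * Ew 0 ((r:ℂ) * rayDir k))
      = fun r : ℝ => rayDir k ^ j * (((r ^ j * Real.exp (-(2 * r ^ 3 / 3)) : ℝ)) : ℂ) := by
    funext r
    have h3 : ((r:ℂ) * rayDir k) ^ 3 = -(r:ℂ) ^ 3 := by
      rw [mul_pow, rayDir_cube k hk, mul_neg_one]
    have e1 : (2 : ℂ) * (((r:ℂ) * rayDir k) ^ 3 / 3 + 0 * ((r:ℂ) * rayDir k) / 2)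
        = ((-(2 * r ^ 3 / 3) : ℝ) : ℂ) := by
      rw [h3]
      push_cast
      ring
    rw [Polynomial.eval_pow, Polynomial.eval_X, Ew, e1, ← Complex.ofReal_exp]
    push_cast
    ring
  rw [e, integral_const_mul]
  have e2 : ∫ r in Ioi (0:ℝ), ((r ^ j * Real.exp (-(2 * r ^ 3 / 3)) : ℝ) : ℂ)
      = ((Creal j : ℝ) : ℂ) := by
    rw [Creal]
    exact integral_ofReal
  rw [e2]
  ring

lemma rayDir_one_eval : rayDir 1 = 1 / 2 + ((Real.sqrt 3 / 2 : ℝ) : ℂ) * Complex.I := by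
  rw [rayDir]
  have e : ((1:ℕ):ℂ) * ↑Real.pi * Complex.I / 3 = ((Real.pi / 3 : ℝ) : ℂ) * Complex.I := by
    push_cast
    ring
  rw [e, Complex.exp_mul_I, ← Complex.ofReal_cos, ← Complex.ofReal_sin,
    Real.cos_pi_div_three, Real.sin_pi_div_three]
  norm_num

lemma rayDir_three_eval : rayDir 3 = -1 := by
  rw [rayDir]
  have e : ((3:ℕ):ℂ) * ↑Real.pi * Complex.I / 3 = ↑Real.pi * Complex.I := by
    push_cast
    ring
  rw [e, Complex.exp_pi_mul_I]

lemma rayDir_five_eval : rayDir 5 = 1 / 2 - ((Real.sqrt 3 / 2 : ℝ) : ℂ) * Complex.I := by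
  rw [rayDir]
  have e : ((5:ℕ):ℂ) * ↑Real.pi * Complex.I / 3
      = 2 * ↑Real.pi * Complex.I + ((-(Real.pi / 3) : ℝ) : ℂ) * Complex.I := by
    push_cast
    ring
  rw [e, Complex.exp_add, Complex.exp_two_pi_mul_I, one_mul, Complex.exp_mul_I,
    ← Complex.ofReal_cos, ← Complex.ofReal_sin, Real.cos_neg, Real.sin_neg,
    Real.cos_pi_div_three, Real.sin_pi_div_three]
  push_cast
  ring

lemma Wf_zero_val : Wf 0 = (((Creal 0 : ℝ) : ℂ) * ((Creal 1 : ℝ) : ℂ))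
    * (-(3 : ℂ) * ((Real.sqrt 3 : ℝ) : ℂ) * Complex.I) := by
  rw [Wf, phi, phi, phi, phi, Jr_zero_eval 3 odd3 0, Jr_zero_eval 3 odd3 1,
    Jr_zero_eval 1 odd1 0, Jr_zero_eval 1 odd1 1, Jr_zero_eval 5 odd5 0,
    Jr_zero_eval 5 odd5 1, rayDir_one_eval, rayDir_three_eval, rayDir_five_eval]
  have hs : ((Real.sqrt 3 : ℝ) : ℂ) * ((Real.sqrt 3 : ℝ) : ℂ) = 3 := by
    rw [← Complex.ofReal_mul, Real.mul_self_sqrt (by norm_num : (0:ℝ) ≤ 3)]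
    norm_num
  push_cast
  set c0 : ℂ := ((Creal 0 : ℝ) : ℂ)
  set c1 : ℂ := ((Creal 1 : ℝ) : ℂ)
  set s : ℂ := ((Real.sqrt 3 : ℝ) : ℂ)
  linear_combination (c0 * c1 * s * Complex.I * (s * s) / 4) * Complex.I_sq
    - (c0 * c1 * s * Complex.I / 4) * hs

lemma Wf_ne (τ : ℂ) : Wf τ ≠ 0 := by
  rw [Wf_const τ, Wf_zero_val]
  apply mul_ne_zero
  · apply mul_ne_zero
    · exact_mod_cast ne_of_gt (Creal_pos 0)
    · exact_mod_cast ne_of_gt (Creal_pos 1)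
  · apply mul_ne_zero
    · apply mul_ne_zero
      · norm_num
      · exact_mod_cast Real.sqrt_ne_zero'.mpr (by norm_num)
    · exact Complex.I_ne_zero

lemma Lf_nondeg (κ κ' t : ℂ) (hκ : κ ≠ 0 ∨ κ' ≠ 0) :
    Lf κ κ' t 1 ≠ 0 ∨ Lf κ κ' t X ≠ 0 := by
  by_contra h
  push_neg at h
  obtain ⟨h1, h2⟩ := h
  have e1 : Lf κ κ' t 1 = κ * phi 1 0 t + κ' * phi 5 0 t := by
    simp only [Lf, phi, pow_zero]
  have e2 : Lf κ κ' t X = κ * phi 1 1 t + κ' * phi 5 1 t := by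
    simp only [Lf, phi, pow_one]
  rw [e1] at h1
  rw [e2] at h2
  have hW := Wf_ne t
  have hκ0 : κ = 0 := by
    have h0 : κ * Wf t = 0 := by
      rw [Wf]
      linear_combination (phi 5 1 t) * h1 - (phi 5 0 t) * h2
    exact (mul_eq_zero.mp h0).resolve_right hW
  have hκ'0 : κ' = 0 := by
    have h0 : κ' * Wf t = 0 := by
      rw [Wf]
      linear_combination (phi 1 0 t) * h2 - (phi 1 1 t) * h1
    exact (mul_eq_zero.mp h0).resolve_right hW
  rcases hκ with h | h <;> contradiction

lemma hasDerivAt_theta (t : ℂ) (q : Polynomial ℂ) (w : ℂ) :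
    HasDerivAt (fun z => q.eval z * Complex.exp (z ^ 3 / 3 + t * z / 2))
      ((derivative q + (X ^ 2 + C (t / 2)) * q).eval w
        * Complex.exp (w ^ 3 / 3 + t * w / 2)) w := by
  have h1 : HasDerivAt (fun z : ℂ => z ^ 3 / 3 + t * z / 2) (w ^ 2 + t / 2) w := by
    have h : HasDerivAt (fun z : ℂ => z ^ 3 / 3 + t * z / 2)
        ((3 : ℕ) * w ^ 2 / 3 + t * 1 / 2) w :=
      ((hasDerivAt_pow 3 w).div_const 3).add (((hasDerivAt_id w).const_mul t).div_const 2)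
    convert h using 1
    push_cast
    ring
  have h2 := (q.hasDerivAt w).mul h1.cexp
  refine h2.congr_deriv ?_
  simp only [Polynomial.eval_add, Polynomial.eval_mul, Polynomial.eval_pow,
    Polynomial.eval_X, Polynomial.eval_C]
  ring

/-- a monic 1-degenerate orthogonal polynomial p of degree n (orthogonal
to x⁰,…,xⁿ with weight e^{2θ(x;t)} on Γ = κ·γ + κ̃·γ̃, κ, κ̃ not both zero) gives a
quasi-polynomial solution F = p·e^θ of the quartic oscillator with J = n+1 and
Λ = t²/4 + 2·(sum of roots of p). -/
theorem degenerate_orthogonal_is_quasipolynomial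
    (n : ℕ) (t : ℂ) (p : Polynomial ℂ) (hmonic : p.Monic) (hdeg : p.natDegree = n)
    (κ κ' : ℂ) (hκ : κ ≠ 0 ∨ κ' ≠ 0)
    (horth : ∀ j ≤ n,
      κ * (rayIntegral 3 (fun x => x ^ j * p.eval x * Complex.exp (2 * (x ^ 3 / 3 + t * x / 2)))
          - rayIntegral 1 (fun x => x ^ j * p.eval x * Complex.exp (2 * (x ^ 3 / 3 + t * x / 2))))
      + κ' * (rayIntegral 3 (fun x => x ^ j * p.eval x * Complex.exp (2 * (x ^ 3 / 3 + t * x / 2)))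
          - rayIntegral 5 (fun x => x ^ j * p.eval x * Complex.exp (2 * (x ^ 3 / 3 + t * x / 2))))
      = 0) :
    ∀ x : ℂ,
      deriv (deriv (fun w => p.eval w * Complex.exp (w ^ 3 / 3 + t * w / 2))) x
        = (x ^ 4 + t * x ^ 2 + 2 * ((n : ℂ) + 1) * x + (t ^ 2 / 4 + 2 * p.roots.sum))
          * (p.eval x * Complex.exp (x ^ 3 / 3 + t * x / 2)) := by
  intro x
  -- translate the orthogonality hypothesis
  have horthL : ∀ j, j ≤ n → Lf κ κ' t (X ^ j * p) = 0 := by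
    intro j hj
    have h := horth j hj
    have efun : (fun x : ℂ => (X ^ j * p).eval x * Ew t x)
        = (fun x : ℂ => x ^ j * p.eval x * Complex.exp (2 * (x ^ 3 / 3 + t * x / 2))) := by
      funext y
      simp [Ew]
    simp only [Lf, Jr, efun]
    exact h
  have hnd := Lf_nondeg κ κ' t hκ
  -- the key polynomial identity
  have hODE : derivative (derivative p) + (C 2 * X ^ 2 + C t) * derivative p
      = C (2 * (n : ℂ)) * (X * p) + C (2 * p.roots.sum) * p := by
    have hsplit : p.roots.sum = -p.nextCoeff := by
      have := Polynomial.Splits.nextCoeff_eq_neg_sum_roots_of_monic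
        (IsAlgClosed.splits p) hmonic
      linear_combination this
    rcases n with _ | n'
    · -- degree 0 : p = 1
      have hp1 : p = 1 := hmonic.natDegree_eq_zero.mp hdeg
      subst hp1
      simp [hsplit, Polynomial.nextCoeff]
    · -- degree n'+1
      set b := p.coeff n' with hb
      have hnext : p.nextCoeff = b := by
        rw [Polynomial.nextCoeff_of_natDegree_pos (by omega : 0 < p.natDegree), hdeg]
        norm_num
        rfl
      set r := derivative (derivative p) + (C 2 * X ^ 2 + C t) * derivative p
          - C (2 * ((n' : ℂ) + 1)) * (X * p) + C (2 * b) * p with hr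
      have hcoeffs : ∀ k, n' + 1 < k → p.coeff k = 0 := by
        intro k hk
        exact Polynomial.coeff_eq_zero_of_natDegree_lt (by omega)
      have htop : p.coeff (n' + 1) = 1 := by
        have := hmonic.coeff_natDegree
        rwa [hdeg] at this
      -- claim A
      have hA : r.natDegree ≤ n' := by
        rw [Polynomial.natDegree_le_iff_coeff_eq_zero]
        intro k hk
        have hrr : r = derivative (derivative p) + derivative p * X ^ 2 * C 2
            + derivative p * C t + p * X ^ 1 * C (-(2 * ((n' : ℂ) + 1))) + p * C (2 * b) := by
          rw [hr]
          simp only [map_neg, map_add, map_mul, map_one, map_ofNat]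
          ring
        rw [hrr]
        simp only [Polynomial.coeff_add, Polynomial.coeff_mul_C, Polynomial.coeff_mul_X_pow',
          Polynomial.coeff_derivative]
        have hk1 : 1 ≤ k := by omega
        rcases (by omega : k = n' + 1 ∨ k = n' + 2 ∨ n' + 3 ≤ k) with h | h | h
        · subst h
          rw [if_pos hk1]
          rcases (by omega : n' = 0 ∨ 1 ≤ n') with h0 | h0
          · subst h0
            norm_num
            rw [hcoeffs 3 (by omega), hcoeffs 2 (by omega), htop]
            ring
          · rw [if_pos (by omega : 2 ≤ n' + 1)]
            have e2 : n' + 1 - 1 = n' := by omega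
            rw [e2, hcoeffs (n' + 1 + 1 + 1) (by omega), hcoeffs (n' + 1 + 1) (by omega), htop,
              show n' + 1 - 2 + 1 = n' by omega, ← hb,
              show ((n' + 1 - 2 : ℕ) : ℂ) = (n' : ℂ) - 1 by
                rw [show n' + 1 - 2 = n' - 1 by omega, Nat.cast_sub h0, Nat.cast_one]]
            ring
        · subst h
          rw [if_pos hk1, if_pos (by omega : 2 ≤ n' + 2)]
          have e1 : n' + 2 - 2 + 1 = n' + 1 := by omega
          have e2 : n' + 2 - 1 = n' + 1 := by omega
          rw [e1, e2, hcoeffs (n' + 2 + 1 + 1) (by omega), hcoeffs (n' + 2 + 1) (by omega),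
            hcoeffs (n' + 2) (by omega), htop]
          push_cast [e1]
          ring
        · rw [if_pos hk1, if_pos (by omega : 2 ≤ k)]
          have e1 : k - 2 + 1 = k - 1 := by omega
          rw [e1, hcoeffs (k + 1 + 1) (by omega), hcoeffs (k + 1) (by omega),
            hcoeffs k (by omega), hcoeffs (k - 1) (by omega)]
          ring
      -- claim B
      have hV : ∀ i, i + 2 ≤ n' + 1 → Lf κ κ' t (X ^ i * derivative p) = 0 := by
        intro i hi
        rw [Hgen (Lf_add κ κ' t) (Lf_Cmul κ κ' t) (Lf_master κ κ' t) p i,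
          horthL (i - 1) (by omega), horthL (i + 2) (by omega), horthL i (by omega)]
        ring
      have hB : ∀ j, j ≤ n' + 1 → Lf κ κ' t (X ^ j * r) = 0 := by
        intro j hj
        have h1 : Lf κ κ' t (X ^ j * derivative (derivative p)
              + (C 2 * X ^ 2 + C t) * (X ^ j * derivative p))
            = -(j : ℂ) * Lf κ κ' t (X ^ (j - 1) * derivative p) := by
          have h := Lf_master κ κ' t (X ^ j * derivative p)
          have e : derivative (X ^ j * derivative p)
              + (C 2 * X ^ 2 + C t) * (X ^ j * derivative p)
              = C (j : ℂ) * (X ^ (j - 1) * derivative p)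
                + (X ^ j * derivative (derivative p)
                  + (C 2 * X ^ 2 + C t) * (X ^ j * derivative p)) := by
            rw [derivative_mul, derivative_X_pow]
            simp only [map_neg, map_add, map_mul, map_one, map_ofNat]
            ring
          rw [e, Lf_add, Lf_Cmul] at h
          linear_combination h
        have e2 : X ^ j * r = (X ^ j * derivative (derivative p)
              + (C 2 * X ^ 2 + C t) * (X ^ j * derivative p))
            + (C (-(2 * ((n' : ℂ) + 1))) * (X ^ (j + 1) * p) + C (2 * b) * (X ^ j * p)) := by
          rw [hr]
          simp only [map_neg, map_add, map_mul, map_one, map_ofNat]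
          ring
        rcases (by omega : j ≤ n' ∨ j = n' + 1) with hj' | hj'
        · rw [e2, Lf_add, h1, Lf_add, Lf_Cmul, Lf_Cmul, horthL (j + 1) (by omega),
            horthL j (by omega)]
          rcases Nat.eq_zero_or_pos j with hj0 | hjp
          · subst hj0; simp
          · rw [hV (j - 1) (by omega)]; ring
        · subst hj'
          rw [e2, Lf_add, h1, Lf_add, Lf_Cmul, Lf_Cmul, horthL (n' + 1) (by omega)]
          have hg := Hgen (Lf_add κ κ' t) (Lf_Cmul κ κ' t) (Lf_master κ κ' t) p n'
          rw [horthL (n' - 1) (by omega), horthL n' (by omega)] at hg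
          rw [show n' + 1 - 1 = n' by omega, hg]
          push_cast
          ring
      -- conclude r = 0
      have hr0 : r = 0 := key_zero (Lf_add κ κ' t) (Lf_Cmul κ κ' t) (Lf_master κ κ' t)
        hnd n' r hA hB
      have hr0' := hr0
      rw [hr] at hr0'
      simp only [map_neg, map_add, map_mul, map_one, map_ofNat, Polynomial.C_eq_natCast] at hr0'
      rw [hsplit, hnext]
      push_cast
      simp only [mul_neg, map_neg, map_add, map_mul, map_one, map_ofNat,
        Polynomial.C_eq_natCast]
      linear_combination hr0'
  -- calculus
  set q₁ := derivative p + (X ^ 2 + C (t / 2)) * p with hq₁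
  have hd1 : deriv (fun w => p.eval w * Complex.exp (w ^ 3 / 3 + t * w / 2))
      = fun w => q₁.eval w * Complex.exp (w ^ 3 / 3 + t * w / 2) :=
    funext fun w => (hasDerivAt_theta t p w).deriv
  have hpoly : derivative q₁ + (X ^ 2 + C (t / 2)) * q₁
      = (X ^ 4 + C t * X ^ 2 + C (2 * ((n : ℂ) + 1)) * X + C (t ^ 2 / 4 + 2 * p.roots.sum)) * p := by
    rw [hq₁]
    simp only [derivative_add, derivative_mul, derivative_X_pow, derivative_C, map_neg,
      map_add, map_mul, map_one, map_ofNat, map_div₀, map_pow, Nat.cast_ofNat]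
    norm_num
    have hODE' := hODE
    simp only [map_neg, map_add, map_mul, map_one, map_ofNat, Polynomial.C_eq_natCast] at hODE'
    have e1 : (C t : Polynomial ℂ) = C (t / 2) * 2 := by
      rw [show ((2 : Polynomial ℂ)) = C (2 : ℂ) from (map_ofNat C 2).symm, ← map_mul]
      congr 1
      ring
    have e2 : (C (t ^ 2 / 4) : Polynomial ℂ) = C (t / 2) ^ 2 := by
      rw [← map_pow]
      congr 1
      ring
    rw [e1] at hODE' ⊢
    rw [e2]
    linear_combination hODE'
  rw [hd1, (hasDerivAt_theta t q₁ x).deriv, hpoly]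
  simp only [Polynomial.eval_mul, Polynomial.eval_add, Polynomial.eval_pow, Polynomial.eval_X,
    Polynomial.eval_C]
  ring
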